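/- arXiv:1610.02379 — 2 statements merged into one kernel-verified Lean document; each statement's English description precedes it below -/
import Mathlib

section
/- Suppose M > 0 and there exist positive semidefinite infinite matrices Γ and Δ such that M·δ_{ij} − 1 = Γ_{ij}(1 − conj(λ_i¹)λ_j¹) + Δ_{ij}(1 − conj(λ_i²)λ_j²) for all i, j, where {λ_i} is a sequence in the bidisk 𝔻². Then for every admissible kernel k on 𝔻², the normalized Gram matrix G^k with entries G^k_{ij} = k(λ_i, λ_j)/√(k(λ_i,λ_i)k(λ_j,λ_j)) satisfies G^k ≤ M·I as an operator inequality (i.e., the matrix M·δ_{ij} − G^k_{ij} is positive semidefinite on finitely supported sequences). -/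
open scoped ComplexConjugate ComplexOrder

/-- The open bidisk in `ℂ²`. -/
def Bidisk : Set (ℂ × ℂ) := {z | ‖z.1‖ < 1 ∧ ‖z.2‖ < 1}

/-- An infinite matrix is positive semidefinite if all its finite quadratic forms
are nonnegative. -/
def IsPSDMatrix (A : ℕ → ℕ → ℂ) : Prop :=
  ∀ (s : Finset ℕ) (c : ℕ → ℂ), 0 ≤ ∑ i ∈ s, ∑ j ∈ s, conj (c i) * c j * A i j

/-- A kernel on the bidisk is positive semidefinite. -/
def IsPSDKernel (k : (ℂ × ℂ) → (ℂ × ℂ) → ℂ) : Prop :=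
  ∀ (n : ℕ) (p : Fin n → ℂ × ℂ), (∀ i, p i ∈ Bidisk) →
    ∀ c : Fin n → ℂ, 0 ≤ ∑ i, ∑ j, conj (c i) * c j * k (p i) (p j)

/-- A kernel on the bidisk is admissible if it is positive semidefinite and multiplication
by each coordinate function is a contraction, i.e. `(1 - conj(λⁿ) zⁿ) k(λ,z) ⪰ 0` for
`n = 1, 2`. -/
def IsAdmissibleKernel (k : (ℂ × ℂ) → (ℂ × ℂ) → ℂ) : Prop :=
  IsPSDKernel k ∧
  IsPSDKernel (fun l z => (1 - conj l.1 * z.1) * k l z) ∧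
  IsPSDKernel (fun l z => (1 - conj l.2 * z.2) * k l z)

-- values on diagonal are "real" (self-conjugate)
lemma psd_diag_conj {A : ℕ → ℕ → ℂ} (hA : IsPSDMatrix A) (i : ℕ) :
    conj (A i i) = A i i := by
  have h := hA {i} (fun _ => 1)
  simp at h
  rw [Complex.nonneg_iff] at h
  exact Complex.conj_eq_iff_im.mpr h.2.symm

lemma psd_herm {A : ℕ → ℕ → ℂ} (hA : IsPSDMatrix A) (i j : ℕ) :
    conj (A i j) = A j i := by
  by_cases hij : i = j
  · subst hij; exact psd_diag_conj hA i
  · have key : ∀ t : ℂ, 0 ≤ A i i + t * A i j + conj t * A j i + conj t * t * A j j := by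
      intro t
      have h := hA {i, j} (fun n => if n = i then 1 else t)
      rw [Finset.sum_pair hij] at h
      rw [Finset.sum_pair hij, Finset.sum_pair hij] at h
      simp only [eq_self_iff_true, if_true, if_neg (Ne.symm hij), map_one, one_mul, mul_one] at h
      convert h using 1
      ring
    have hii := psd_diag_conj hA i
    have hjj := psd_diag_conj hA j
    rw [Complex.conj_eq_iff_im] at hii hjj
    have h1 := key 1
    have h2 := key Complex.I
    rw [Complex.nonneg_iff] at h1 h2
    have e1 := h1.2.symm
    have e2 := h2.2.symm
    simp [Complex.add_im, Complex.mul_im, Complex.conj_im, Complex.conj_re, hii, hjj,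
      Complex.I_re, Complex.I_im] at e1 e2
    apply Complex.ext
    · simp only [Complex.conj_re]; linarith
    · simp only [Complex.conj_im]; linarith

lemma psd_add {A B : ℕ → ℕ → ℂ} (hA : IsPSDMatrix A) (hB : IsPSDMatrix B) :
    IsPSDMatrix (fun i j => A i j + B i j) := by
  intro s c
  have := add_nonneg (hA s c) (hB s c)
  convert this using 1
  rw [← Finset.sum_add_distrib]
  apply Finset.sum_congr rfl
  intro i _
  rw [← Finset.sum_add_distrib]
  apply Finset.sum_congr rfl
  intro j _
  ring

lemma psd_scale {A : ℕ → ℕ → ℂ} (hA : IsPSDMatrix A) (d : ℕ → ℝ) :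
    IsPSDMatrix (fun i j => (d i : ℂ) * (d j : ℂ) * A i j) := by
  intro s c
  have h := hA s (fun i => c i * (d i : ℂ))
  convert h using 1
  apply Finset.sum_congr rfl
  intro i _
  apply Finset.sum_congr rfl
  intro j _
  simp only [map_mul, Complex.conj_ofReal]
  ring

lemma psd_schur {A B : ℕ → ℕ → ℂ} (hA : IsPSDMatrix A) (hB : IsPSDMatrix B) :
    IsPSDMatrix (fun i j => A i j * B i j) := by
  classical
  intro s c
  set A' : Matrix s s ℂ := Matrix.of (fun i j => A i j) with hA'def
  have hPSD : A'.PosSemidef := by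
    refine Matrix.PosSemidef.of_dotProduct_mulVec_nonneg ?_ ?_
    · ext i j
      exact psd_herm hA (j : ℕ) (i : ℕ)
    · intro x
      set c' : ℕ → ℂ := fun n => if h : n ∈ s then x ⟨n, h⟩ else 0 with hc'
      have h := hA s c'
      have heq : ∑ i ∈ s, ∑ j ∈ s, conj (c' i) * c' j * A i j
          = dotProduct (star x) (A'.mulVec x) := by
        rw [dotProduct, ← Finset.sum_coe_sort s]
        apply Finset.sum_congr rfl
        intro i _
        rw [Matrix.mulVec, dotProduct, Finset.mul_sum, ← Finset.sum_coe_sort s]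
        apply Finset.sum_congr rfl
        intro j _
        simp only [hc', hA'def, dif_pos i.2, dif_pos j.2, Subtype.coe_eta, Pi.star_apply,
          Matrix.of_apply, RCLike.star_def]
        ring
      rw [heq] at h
      exact h
  obtain ⟨V, hV⟩ : ∃ V : Matrix s s ℂ, A' = V.conjTranspose * V := by
    open scoped MatrixOrder Matrix.Norms.L2Operator in
    exact CStarAlgebra.nonneg_iff_eq_star_mul_self.mp hPSD.nonneg
  have hAentry : ∀ i j : s, A (i : ℕ) (j : ℕ) = ∑ m : s, conj (V m i) * V m j := by
    intro i j
    have : A' i j = (V.conjTranspose * V) i j := by rw [← hV]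
    simpa [hA'def, Matrix.mul_apply, Matrix.conjTranspose_apply, mul_comm] using this
  set d : s → ℕ → ℂ := fun m n => if h : n ∈ s then c n * V m ⟨n, h⟩ else 0 with hd
  have key : ∑ i ∈ s, ∑ j ∈ s, conj (c i) * c j * (A i j * B i j)
      = ∑ m : s, ∑ i ∈ s, ∑ j ∈ s, conj (d m i) * d m j * B i j := by
    calc ∑ i ∈ s, ∑ j ∈ s, conj (c i) * c j * (A i j * B i j)
        = ∑ i ∈ s, ∑ j ∈ s, ∑ m : s, conj (d m i) * d m j * B i j := by
          refine Finset.sum_congr rfl fun i hi => Finset.sum_congr rfl fun j hj => ?_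
          have hij : A i j = ∑ m : s, conj (V m ⟨i, hi⟩) * V m ⟨j, hj⟩ :=
            hAentry ⟨i, hi⟩ ⟨j, hj⟩
          rw [hij, Finset.sum_mul, Finset.mul_sum]
          refine Finset.sum_congr rfl fun m _ => ?_
          simp only [hd, dif_pos hi, dif_pos hj, map_mul]
          ring
      _ = ∑ i ∈ s, ∑ m : s, ∑ j ∈ s, conj (d m i) * d m j * B i j :=
          Finset.sum_congr rfl fun i _ => Finset.sum_comm
      _ = ∑ m : s, ∑ i ∈ s, ∑ j ∈ s, conj (d m i) * d m j * B i j :=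
          Finset.sum_comm
  show 0 ≤ ∑ i ∈ s, ∑ j ∈ s, conj (c i) * c j * (A i j * B i j)
  rw [key]
  exact Finset.sum_nonneg fun m _ => hB s (d m)

lemma psd_of_kernel {K : (ℂ × ℂ) → (ℂ × ℂ) → ℂ} (hK : IsPSDKernel K)
    (l : ℕ → ℂ × ℂ) (hl : ∀ i, l i ∈ Bidisk) :
    IsPSDMatrix (fun i j => K (l i) (l j)) := by
  intro s c
  classical
  have h := hK s.card (fun m => l (s.equivFin.symm m)) (fun m => hl _)
    (fun m => c (s.equivFin.symm m))
  have heq : ∑ i ∈ s, ∑ j ∈ s, conj (c i) * c j * K (l i) (l j)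
      = ∑ m : Fin s.card, ∑ m' : Fin s.card,
          conj (c (s.equivFin.symm m)) * c (s.equivFin.symm m') *
            K (l (s.equivFin.symm m)) (l (s.equivFin.symm m')) := by
    rw [← Finset.sum_coe_sort s, ← Equiv.sum_comp s.equivFin.symm]
    refine Finset.sum_congr rfl fun m _ => ?_
    rw [← Finset.sum_coe_sort s
      (fun j => conj (c (s.equivFin.symm m : ℕ)) * c j * K (l (s.equivFin.symm m)) (l j)),
      ← Equiv.sum_comp s.equivFin.symm]
  rw [heq]
  exact h


/-- Condition (a') implies condition (a): if `M δ_{ij} − 1` decomposes as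
`Γ_{ij}(1 − conj(λ_i¹)λ_j¹) + Δ_{ij}(1 − conj(λ_i²)λ_j²)` with `Γ, Δ ⪰ 0`, then for every
admissible kernel `k` the normalized Gram matrix satisfies `G^k ≤ M·I`. -/
theorem gram_upper_bound_of_decomposition
    (l : ℕ → ℂ × ℂ) (hl : ∀ i, l i ∈ Bidisk) (M : ℝ) (hM : 0 < M)
    (Γ Δ : ℕ → ℕ → ℂ) (hΓ : IsPSDMatrix Γ) (hΔ : IsPSDMatrix Δ)
    (hdec : ∀ i j, (M : ℂ) * (if i = j then 1 else 0) - 1 =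
      Γ i j * (1 - conj (l i).1 * (l j).1) + Δ i j * (1 - conj (l i).2 * (l j).2))
    (k : (ℂ × ℂ) → (ℂ × ℂ) → ℂ) (hk : IsAdmissibleKernel k)
    (hdiag : ∀ i, 0 < (k (l i) (l i)).re ∧ (k (l i) (l i)).im = 0) :
    IsPSDMatrix (fun i j =>
      (M : ℂ) * (if i = j then 1 else 0) -
        k (l i) (l j) /
          ((Real.sqrt ((k (l i) (l i)).re) * Real.sqrt ((k (l j) (l j)).re) : ℝ) : ℂ)) := by
  set r : ℕ → ℝ := fun i => (k (l i) (l i)).re with hr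
  set d : ℕ → ℝ := fun i => (Real.sqrt (r i))⁻¹ with hd
  set G : ℕ → ℕ → ℂ := fun i j =>
    k (l i) (l j) / ((Real.sqrt (r i) * Real.sqrt (r j) : ℝ) : ℂ) with hG
  have hkreal : ∀ i, k (l i) (l i) = ((r i : ℝ) : ℂ) := by
    intro i
    apply Complex.ext
    · simp [hr]
    · simp [(hdiag i).2]
  have hGdiag : ∀ i, G i i = 1 := by
    intro i
    rw [hG]
    simp only
    rw [hkreal i, Real.mul_self_sqrt (hdiag i).1.le]
    exact div_self (by exact_mod_cast (hdiag i).1.ne')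
  have hrw : (fun i j =>
      (M : ℂ) * (if i = j then 1 else 0) -
        k (l i) (l j) /
          ((Real.sqrt ((k (l i) (l i)).re) * Real.sqrt ((k (l j) (l j)).re) : ℝ) : ℂ))
      = fun i j =>
        Γ i j * ((d i : ℂ) * (d j : ℂ) *
          ((fun a b => (1 - conj a.1 * b.1) * k a b) (l i) (l j))) +
        Δ i j * ((d i : ℂ) * (d j : ℂ) *
          ((fun a b => (1 - conj a.2 * b.2) * k a b) (l i) (l j))) := by
    funext i j
    have step1 : (M : ℂ) * (if i = j then 1 else 0) - G i j
        = ((M : ℂ) * (if i = j then 1 else 0) - 1) * G i j := by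
      by_cases hij : i = j
      · subst hij
        rw [hGdiag i]
        simp
      · simp [hij]
    have sqrt_ne : ∀ i, (Real.sqrt (r i) : ℂ) ≠ 0 := by
      intro i
      exact_mod_cast (Real.sqrt_pos.mpr (hdiag i).1).ne'
    show (M : ℂ) * (if i = j then 1 else 0) - G i j = _
    rw [step1, hdec i j, hG]
    simp only [hd]
    push_cast
    ring
  rw [hrw]
  exact psd_add
    (psd_schur hΓ (psd_scale (psd_of_kernel hk.2.1 l hl) d))
    (psd_schur hΔ (psd_scale (psd_of_kernel hk.2.2 l hl) d))
end

section
/- Fix points λ_1,…,λ_n in 𝔻² and M > 0. If the self-adjoint n×n matrix M·I − J (where J is the all-ones matrix) is not in the closed wedge 𝒯_n of matrices of the form T_{ij} = (1 − λ_i¹ conj(λ_j¹))Γ_{ij} + (1 − λ_i² conj(λ_j²))Δ_{ij} with Γ, Δ positive semidefinite, then there exists a positive definite n×n matrix K satisfying (1 − λ_i¹ conj(λ_j¹))·K_{ij} ⪰ 0 and (1 − λ_i² conj(λ_j²))·K_{ij} ⪰ 0 (Schur products positive semidefinite) but for which the matrix (M·δ_{ij} − 1)K_{ij} is not positive semidefinite.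 -/
open scoped ComplexConjugate ComplexOrder Matrix
open Filter Topology

namespace SepAux

variable {n : ℕ}

/-- zero matrix is PSD -/
lemma psd_zero : (0 : Matrix (Fin n) (Fin n) ℂ).PosSemidef :=
  ⟨Matrix.isHermitian_zero, fun x => by simp⟩

lemma psd_add {A B : Matrix (Fin n) (Fin n) ℂ} (hA : A.PosSemidef) (hB : B.PosSemidef) :
    (A + B).PosSemidef :=
  Matrix.PosSemidef.of_dotProduct_mulVec_nonneg (hA.1.add hB.1) fun x => by
    rw [Matrix.add_mulVec, dotProduct_add]
    exact add_nonneg (hA.dotProduct_mulVec_nonneg x) (hB.dotProduct_mulVec_nonneg x)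

lemma psd_smul {A : Matrix (Fin n) (Fin n) ℂ} (hA : A.PosSemidef) {r : ℝ} (hr : 0 ≤ r) :
    ((r : ℂ) • A).PosSemidef := by
  refine Matrix.PosSemidef.of_dotProduct_mulVec_nonneg ?_ fun x => ?_
  · unfold Matrix.IsHermitian
    rw [Matrix.conjTranspose_smul, hA.1.eq]
    congr 1
    simp
  · rw [Matrix.smul_mulVec, dotProduct_smul, smul_eq_mul]
    exact mul_nonneg (by exact_mod_cast Complex.zero_le_real.2 hr) (hA.dotProduct_mulVec_nonneg x)

lemma szego_psd (μ : Fin n → ℂ) (hμ : ∀ i, ‖μ i‖ < 1) :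
    (Matrix.of fun i j => (1 - μ i * conj (μ j))⁻¹).PosSemidef := by
  have hnorm : ∀ i j : Fin n, ‖μ i * conj (μ j)‖ < 1 := by
    intro i j
    rw [norm_mul, Complex.norm_conj]
    nlinarith [hμ i, hμ j, norm_nonneg (μ i), norm_nonneg (μ j)]
  refine Matrix.PosSemidef.of_dotProduct_mulVec_nonneg ?_ ?_
  · unfold Matrix.IsHermitian
    ext i j
    simp only [Matrix.conjTranspose_apply, Matrix.of_apply, map_inv₀, map_sub, map_one, map_mul,
      Complex.conj_conj, starRingEnd_apply, star_inv₀, star_sub, star_one, star_mul', star_star]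
    ring_nf
  · intro x
    have key : star x ⬝ᵥ ((Matrix.of fun i j => (1 - μ i * conj (μ j))⁻¹) *ᵥ x)
        = ∑' k : ℕ, ((∑ i, conj (x i) * μ i ^ k) * conj (∑ i, conj (x i) * μ i ^ k)) := by
      have hsummable : ∀ p : Fin n × Fin n, Summable (fun k : ℕ =>
          conj (x p.1) * x p.2 * (μ p.1 ^ k * conj (μ p.2) ^ k)) := by
        intro p
        simp_rw [← mul_pow]
        exact (summable_geometric_of_norm_lt_one (hnorm p.1 p.2)).mul_left _
      calc star x ⬝ᵥ ((Matrix.of fun i j => (1 - μ i * conj (μ j))⁻¹) *ᵥ x)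
          = ∑ p : Fin n × Fin n, conj (x p.1) * x p.2 * (1 - μ p.1 * conj (μ p.2))⁻¹ := by
            rw [dotProduct, Fintype.sum_prod_type]
            refine Finset.sum_congr rfl fun i _ => ?_
            rw [Matrix.mulVec, dotProduct, Finset.mul_sum]
            refine Finset.sum_congr rfl fun j _ => ?_
            simp only [Pi.star_apply, Matrix.of_apply, RCLike.star_def]
            ring
        _ = ∑ p : Fin n × Fin n, ∑' k : ℕ, conj (x p.1) * x p.2 * (μ p.1 ^ k * conj (μ p.2) ^ k) := by
            refine Finset.sum_congr rfl fun p _ => ?_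
            rw [← tsum_geometric_of_norm_lt_one (hnorm p.1 p.2), ← tsum_mul_left]
            exact tsum_congr fun k => by rw [mul_pow]
        _ = ∑' k : ℕ, ∑ p : Fin n × Fin n, conj (x p.1) * x p.2 * (μ p.1 ^ k * conj (μ p.2) ^ k) :=
            (Summable.tsum_finsetSum fun p _ => hsummable p).symm
        _ = ∑' k : ℕ, ((∑ i, conj (x i) * μ i ^ k) * (∑ i, x i * conj (μ i) ^ k)) := by
            refine tsum_congr fun k => ?_
            rw [Finset.sum_mul_sum, Fintype.sum_prod_type]
            refine Finset.sum_congr rfl fun i _ => Finset.sum_congr rfl fun j _ => by ring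
        _ = ∑' k : ℕ, ((∑ i, conj (x i) * μ i ^ k) * conj (∑ i, conj (x i) * μ i ^ k)) := by
            refine tsum_congr fun k => ?_
            congr 1
            rw [map_sum]
            exact Finset.sum_congr rfl fun i _ => by
              rw [map_mul, Complex.conj_conj, map_pow]
    rw [key]
    refine tsum_nonneg fun k => ?_
    rw [Complex.mul_conj]
    exact_mod_cast Complex.zero_le_real.2 (Complex.normSq_nonneg _)

attribute [local instance] Matrix.normedAddCommGroup Matrix.normedSpace

lemma continuous_entry (i j : Fin n) :
    Continuous fun A : Matrix (Fin n) (Fin n) ℂ => A i j := by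
  refine (LipschitzWith.of_dist_le_mul (K := 1) fun A B => ?_).continuous
  rw [dist_eq_norm, dist_eq_norm, NNReal.coe_one, one_mul]
  exact le_trans (le_of_eq (by rw [Matrix.sub_apply])) (Matrix.norm_entry_le_entrywise_sup_norm (A - B))

lemma isClosed_psd : IsClosed {A : Matrix (Fin n) (Fin n) ℂ | A.PosSemidef} := by
  have heq : {A : Matrix (Fin n) (Fin n) ℂ | A.PosSemidef} =
      (⋂ i, ⋂ j, {A : Matrix (Fin n) (Fin n) ℂ | conj (A j i) = A i j}) ∩
      ⋂ x : Fin n → ℂ, {A : Matrix (Fin n) (Fin n) ℂ | 0 ≤ star x ⬝ᵥ A *ᵥ x} := by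
    ext A
    simp only [Set.mem_setOf_eq, Set.mem_inter_iff, Set.mem_iInter, Matrix.posSemidef_iff_dotProduct_mulVec]
    constructor
    · rintro ⟨h1, h2⟩
      exact ⟨fun i j => congrFun (congrFun h1 i) j, h2⟩
    · rintro ⟨h1, h2⟩
      exact ⟨Matrix.ext fun i j => h1 i j, h2⟩
  rw [heq]
  refine IsClosed.inter ?_ ?_
  · exact isClosed_iInter fun i => isClosed_iInter fun j =>
      isClosed_eq (Complex.continuous_conj.comp (continuous_entry j i)) (continuous_entry i j)
  · refine isClosed_iInter fun x => ?_
    have hf : Continuous fun A : Matrix (Fin n) (Fin n) ℂ => star x ⬝ᵥ A *ᵥ x := by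
      have : (fun A : Matrix (Fin n) (Fin n) ℂ => star x ⬝ᵥ A *ᵥ x) =
          fun A => ∑ i, ∑ j, conj (x i) * A i j * x j := by
        funext A
        rw [dotProduct]
        refine Finset.sum_congr rfl fun i _ => ?_
        rw [Matrix.mulVec, dotProduct, Finset.mul_sum]
        refine Finset.sum_congr rfl fun j _ => ?_
        simp only [Pi.star_apply, RCLike.star_def]
        ring
      rw [this]
      exact continuous_finset_sum _ fun i _ => continuous_finset_sum _ fun j _ =>
        ((continuous_const.mul (continuous_entry i j)).mul continuous_const)
    exact isClosed_le continuous_const hf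

lemma psd_diag_nonneg {A : Matrix (Fin n) (Fin n) ℂ} (hA : A.PosSemidef) (i : Fin n) :
    0 ≤ A i i := by
  have h := hA.dotProduct_mulVec_nonneg (Pi.single i 1)
  rwa [← Pi.single_star, star_one, Matrix.mulVec_single_one, single_dotProduct,
    one_mul] at h

lemma psd_entry_le_trace {A : Matrix (Fin n) (Fin n) ℂ} (hA : A.PosSemidef) (i j : Fin n) :
    ‖A i j‖ ≤ A.trace.re := by
  have hdiag : ∀ k, 0 ≤ (A k k).re := fun k => (Complex.le_def.mp (psd_diag_nonneg hA k)).1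
  have htr : A.trace.re = ∑ k, (A k k).re := by
    rw [Matrix.trace, Complex.re_sum]; rfl
  have hle : ∀ k, (A k k).re ≤ A.trace.re := by
    intro k
    rw [htr]
    exact Finset.single_le_sum (fun k _ => hdiag k) (Finset.mem_univ k)
  by_cases hij : i = j
  · subst hij
    have h0 : 0 ≤ A i i := psd_diag_nonneg hA i
    have him : (A i i).im = 0 := by
      have h2 := (Complex.le_def.mp h0).2
      simpa using h2.symm
    have : ‖A i i‖ = (A i i).re := by
      rw [Complex.norm_def, Complex.normSq_apply, him, mul_zero, add_zero,
        Real.sqrt_mul_self (hdiag i)]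
    rw [this]; exact hle i
  · by_cases h0 : A i j = 0
    · rw [h0]
      simpa using le_trans (hdiag i) (hle i)
    · set a : ℝ := ‖A i j‖ with ha
      have ha0 : (0:ℝ) < a := by
        rw [ha]; exact norm_pos_iff.mpr h0
      have habs : (a : ℂ) ≠ 0 := by exact_mod_cast ha0.ne'
      set u : ℂ := -(conj (A i j) / (a : ℂ)) with hu
      have hmc : conj (A i j) * A i j = (a : ℂ) * (a : ℂ) := by
        rw [mul_comm, Complex.mul_conj, ha]
        rw [← Complex.sq_norm]
        push_cast
        ring
      have huA : u * A i j = -(a : ℂ) := by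
        rw [hu]
        field_simp
        rw [hmc]; ring
      have hji : A j i = conj (A i j) := by
        calc A j i = star (star (A j i)) := (star_star _).symm
          _ = conj (A i j) := by rw [hA.1.apply i j]; rfl
      have hcu : conj u * A j i = -(a : ℂ) := by
        rw [hji, ← map_mul, huA, map_neg, Complex.conj_ofReal]
      set x : Fin n → ℂ := Pi.single i (1:ℂ) + Pi.single j u with hx
      have hstar : star x = Pi.single i (1:ℂ) + Pi.single j (conj u) := by
        rw [hx]
        funext k
        rw [Pi.star_apply, Pi.add_apply, star_add, Pi.add_apply, Pi.single_apply, Pi.single_apply,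
          apply_ite star, apply_ite star, star_one, star_zero, starRingEnd_apply,
          Pi.single_apply]
      have hq := hA.dotProduct_mulVec_nonneg x
      have hqval : star x ⬝ᵥ A *ᵥ x = A i i + u * A i j + conj u * A j i + conj u * u * A j j := by
        rw [hstar, hx, Matrix.mulVec_add, Matrix.mulVec_single, Matrix.mulVec_single,
          add_dotProduct, single_dotProduct, single_dotProduct]
        simp only [Pi.add_apply, mul_one, Pi.smul_apply, MulOpposite.smul_eq_mul_unop,
          MulOpposite.unop_op, Matrix.col_apply]
        ring
      have hu1 : conj u * u = 1 := by
        rw [hu]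
        rw [map_neg, map_div₀, Complex.conj_conj, Complex.conj_ofReal, neg_mul_neg,
          div_mul_div_comm, Complex.mul_conj]
        have hns : Complex.normSq (A i j) = a * a := by
          rw [ha, ← Complex.sq_norm]; ring
        rw [hns]
        push_cast
        exact div_self (mul_ne_zero habs habs)
      rw [hqval, huA, hcu, hu1, one_mul] at hq
      have hre := (Complex.le_def.mp hq).1
      simp only [Complex.add_re, Complex.neg_re, Complex.ofReal_re, Complex.zero_re] at hre
      have h1 := hle i
      have h2 := hle j
      linarith

/-- The wedge of matrices `c1 ∘ Γ + c2 ∘ Δ` with `Γ, Δ` PSD. -/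
def wedge (c1 c2 : Matrix (Fin n) (Fin n) ℂ) : Set (Matrix (Fin n) (Fin n) ℂ) :=
  {X | ∃ Γ Δ : Matrix (Fin n) (Fin n) ℂ, Γ.PosSemidef ∧ Δ.PosSemidef ∧
    ∀ i j, X i j = c1 i j * Γ i j + c2 i j * Δ i j}

lemma psd_trace_re_nonneg {A : Matrix (Fin n) (Fin n) ℂ} (hA : A.PosSemidef) :
    0 ≤ A.trace.re := by
  rw [Matrix.trace, Complex.re_sum]
  exact Finset.sum_nonneg fun k _ => (Complex.le_def.mp (psd_diag_nonneg hA k)).1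

lemma isClosed_wedge (c1 c2 : Matrix (Fin n) (Fin n) ℂ) (m : ℝ) (hm : 0 < m)
    (h1 : ∀ i, m ≤ (c1 i i).re) (h2 : ∀ i, m ≤ (c2 i i).re) :
    IsClosed (wedge c1 c2) := by
  haveI : FiniteDimensional ℝ (Matrix (Fin n) (Fin n) ℂ) := by
    infer_instance
  haveI : ProperSpace (Matrix (Fin n) (Fin n) ℂ) := FiniteDimensional.proper ℝ _
  haveI : SequentialSpace (Matrix (Fin n) (Fin n) ℂ) :=
    inferInstanceAs (SequentialSpace (Fin n → Fin n → ℂ))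
  haveI : FirstCountableTopology (Matrix (Fin n) (Fin n) ℂ × Matrix (Fin n) (Fin n) ℂ) :=
    inferInstanceAs (FirstCountableTopology ((Fin n → Fin n → ℂ) × (Fin n → Fin n → ℂ)))
  refine IsSeqClosed.isClosed fun T X hT hlim => ?_
  choose Γ Δ hΓ hΔ hTeq using hT
  have hent : ∀ i j, Tendsto (fun k => T k i j) atTop (𝓝 (X i j)) := fun i j =>
    ((continuous_entry i j).tendsto X).comp hlim
  have hrlim : Tendsto (fun k => ∑ i, (T k i i).re) atTop (𝓝 (∑ i, (X i i).re)) :=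
    tendsto_finset_sum _ fun i _ => (Complex.continuous_re.tendsto _).comp (hent i i)
  obtain ⟨C, hC⟩ := hrlim.bddAbove_range
  have hC' : ∀ k, ∑ i, (T k i i).re ≤ C := fun k => hC ⟨k, rfl⟩
  -- trace bounds
  have key : ∀ k, (Γ k).trace.re ≤ C / m ∧ (Δ k).trace.re ≤ C / m := by
    intro k
    have hterm : ∀ i, m * ((Γ k) i i).re + m * ((Δ k) i i).re ≤ (T k i i).re := by
      intro i
      have hg := Complex.le_def.mp (psd_diag_nonneg (hΓ k) i)
      have hd := Complex.le_def.mp (psd_diag_nonneg (hΔ k) i)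
      have : (T k i i).re = (c1 i i * (Γ k) i i).re + (c2 i i * (Δ k) i i).re := by
        rw [hTeq k i i, Complex.add_re]
      rw [this, Complex.mul_re, Complex.mul_re, ← hg.2, ← hd.2]
      simp only [Complex.zero_im, mul_zero, sub_zero]
      have hg1 : 0 ≤ (Γ k i i).re := by simpa using hg.1
      have hd1 : 0 ≤ (Δ k i i).re := by simpa using hd.1
      nlinarith [mul_le_mul_of_nonneg_right (h1 i) hg1, mul_le_mul_of_nonneg_right (h2 i) hd1]
    have hsum : m * (Γ k).trace.re + m * (Δ k).trace.re ≤ C := by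
      have := Finset.sum_le_sum fun i (_ : i ∈ Finset.univ) => hterm i
      rw [Finset.sum_add_distrib, ← Finset.mul_sum, ← Finset.mul_sum] at this
      have htr1 : (Γ k).trace.re = ∑ i, ((Γ k) i i).re := by
        rw [Matrix.trace, Complex.re_sum]; rfl
      have htr2 : (Δ k).trace.re = ∑ i, ((Δ k) i i).re := by
        rw [Matrix.trace, Complex.re_sum]; rfl
      rw [htr1, htr2]
      exact le_trans this (hC' k)
    have hg0 := psd_trace_re_nonneg (hΓ k)
    have hd0 := psd_trace_re_nonneg (hΔ k)
    constructor
    · rw [le_div_iff₀ hm]; nlinarith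
    · rw [le_div_iff₀ hm]; nlinarith
  have hball : ∀ k, Γ k ∈ Metric.closedBall (0 : Matrix (Fin n) (Fin n) ℂ) (C / m) ∧
      Δ k ∈ Metric.closedBall (0 : Matrix (Fin n) (Fin n) ℂ) (C / m) := by
    intro k
    have hCm : 0 ≤ C / m := le_trans (psd_trace_re_nonneg (hΓ k)) (key k).1
    constructor
    · rw [Metric.mem_closedBall, dist_zero_right]
      rw [Matrix.norm_le_iff hCm]
      intro i j
      exact le_trans (psd_entry_le_trace (hΓ k) i j) (le_trans (key k).1 (le_refl _))
    · rw [Metric.mem_closedBall, dist_zero_right]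
      rw [Matrix.norm_le_iff hCm]
      intro i j
      exact le_trans (psd_entry_le_trace (hΔ k) i j) (key k).2
  set S : Set (Matrix (Fin n) (Fin n) ℂ) :=
    {A | A.PosSemidef} ∩ Metric.closedBall 0 (C / m) with hS
  have hScompact : IsCompact S :=
    (isCompact_closedBall (0 : Matrix (Fin n) (Fin n) ℂ) (C / m)).inter_left isClosed_psd
  have hmem : ∀ k, (Γ k, Δ k) ∈ S ×ˢ S := fun k =>
    ⟨⟨hΓ k, (hball k).1⟩, ⟨hΔ k, (hball k).2⟩⟩
  obtain ⟨⟨G, D⟩, hGD, φ, hφmono, hφtend⟩ := (hScompact.prod hScompact).tendsto_subseq hmem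
  refine ⟨G, D, hGD.1.1, hGD.2.1, fun i j => ?_⟩
  have t1 : Tendsto (fun k => T (φ k) i j) atTop (𝓝 (X i j)) :=
    (hent i j).comp hφmono.tendsto_atTop
  have tG : Tendsto (fun k => (Γ (φ k)) i j) atTop (𝓝 (G i j)) :=
    ((continuous_entry i j).tendsto G).comp ((continuous_fst.tendsto (G, D)).comp hφtend)
  have tD : Tendsto (fun k => (Δ (φ k)) i j) atTop (𝓝 (D i j)) :=
    ((continuous_entry i j).tendsto D).comp ((continuous_snd.tendsto (G, D)).comp hφtend)
  have t2 : Tendsto (fun k => T (φ k) i j) atTop (𝓝 (c1 i j * G i j + c2 i j * D i j)) := by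
    have : (fun k => T (φ k) i j) =
        fun k => c1 i j * (Γ (φ k)) i j + c2 i j * (Δ (φ k)) i j := by
      funext k; exact hTeq (φ k) i j
    rw [this]
    exact ((tendsto_const_nhds.mul tG).add (tendsto_const_nhds.mul tD))
  exact tendsto_nhds_unique t1 t2

lemma psd_rankone (g : Fin n → ℂ) : (Matrix.of fun i j => g i * conj (g j)).PosSemidef := by
  refine Matrix.PosSemidef.of_dotProduct_mulVec_nonneg ?_ ?_
  · ext i j
    simp only [Matrix.conjTranspose_apply, Matrix.of_apply, star_mul', RCLike.star_def,
      Complex.conj_conj]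
    ring
  · intro x
    have key : star x ⬝ᵥ (Matrix.of fun i j => g i * conj (g j)) *ᵥ x
        = (∑ i, conj (x i) * g i) * (∑ j, x j * conj (g j)) := by
      rw [Finset.sum_mul_sum, dotProduct]
      refine Finset.sum_congr rfl fun i _ => ?_
      rw [Matrix.mulVec, dotProduct, Finset.mul_sum]
      refine Finset.sum_congr rfl fun j _ => ?_
      simp only [Pi.star_apply, Matrix.of_apply, RCLike.star_def]
      ring
    have hc2 : (∑ j, x j * conj (g j)) = conj (∑ j, conj (x j) * g j) := by
      rw [map_sum]
      refine Finset.sum_congr rfl fun j _ => ?_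
      rw [map_mul, Complex.conj_conj]
    rw [key, hc2, Complex.mul_conj]
    exact_mod_cast Complex.zero_le_real.2 (Complex.normSq_nonneg _)

lemma herm_quad (c d : Matrix (Fin n) (Fin n) ℂ) (hd : ∀ i j, conj (d j i) = d i j)
    (hpos : ∀ g : Fin n → ℂ, 0 ≤ (∑ i, ∑ j, d i j * (g i * conj (g j)) * c i j).re) :
    (Matrix.of fun i j => d i j * ((c i j + conj (c j i)) / 2)).PosSemidef := by
  refine Matrix.PosSemidef.of_dotProduct_mulVec_nonneg ?_ ?_
  · ext i j
    simp only [Matrix.conjTranspose_apply, Matrix.of_apply, star_mul', star_div₀, star_add,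
      RCLike.star_def, Complex.conj_conj, map_ofNat]
    rw [hd i j]
    ring
  · intro x
    set S : ℂ := ∑ i, ∑ j, d i j * (conj (x i) * x j) * c i j with hSdef
    have hconj : conj S = ∑ i, ∑ j, d i j * (x j * conj (x i)) * conj (c j i) := by
      rw [hSdef, map_sum, Finset.sum_comm]
      refine Finset.sum_congr rfl fun i _ => ?_
      rw [map_sum]
      refine Finset.sum_congr rfl fun j _ => ?_
      rw [map_mul, map_mul, map_mul, Complex.conj_conj, hd j i]
    have hQ : star x ⬝ᵥ (Matrix.of fun i j => d i j * ((c i j + conj (c j i)) / 2)) *ᵥ x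
        = (S + conj S) / 2 := by
      rw [hconj, hSdef, ← Finset.sum_add_distrib]
      rw [Finset.sum_div]
      rw [dotProduct]
      refine Finset.sum_congr rfl fun i _ => ?_
      rw [← Finset.sum_add_distrib, Finset.sum_div, Matrix.mulVec, dotProduct,
        Finset.mul_sum]
      refine Finset.sum_congr rfl fun j _ => ?_
      simp only [Pi.star_apply, Matrix.of_apply, RCLike.star_def]
      ring
    have hS : 0 ≤ S.re := by
      have h := hpos (star x)
      refine le_trans h (le_of_eq ?_)
      congr 1
      refine Finset.sum_congr rfl fun i _ => Finset.sum_congr rfl fun j _ => ?_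
      simp only [Pi.star_apply, RCLike.star_def, Complex.conj_conj]
    rw [hQ, Complex.add_conj]
    have : ((2 * S.re : ℝ) : ℂ) / 2 = ((S.re : ℝ) : ℂ) := by
      push_cast; ring
    rw [this]
    exact Complex.zero_le_real.2 hS

end SepAux

attribute [local instance] Matrix.normedAddCommGroup Matrix.normedSpace

/-- Hahn–Banach separation step: if `M·I − J` (with `J` the all-ones matrix) is not in the
closed wedge `𝒯_n` of matrices `T_{ij} = (1 − λ_i¹ conj(λ_j¹))Γ_{ij} +
(1 − λ_i² conj(λ_j²))Δ_{ij}` with `Γ, Δ ⪰ 0`, then there is a positive definite matrix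
`K` whose Schur products with `(1 − λ_i¹ conj(λ_j¹))` and `(1 − λ_i² conj(λ_j²))` are
positive semidefinite, but such that `((M δ_{ij} − 1) K_{ij})` is not positive
semidefinite. -/
theorem separation_from_wedge
    {n : ℕ} (l : Fin n → ℂ × ℂ) (hl : ∀ i, l i ∈ Bidisk) (M : ℝ) (hM : 0 < M)
    (hnot : ¬ ∃ Γ Δ : Matrix (Fin n) (Fin n) ℂ, Γ.PosSemidef ∧ Δ.PosSemidef ∧
      ∀ i j, (M : ℂ) * (if i = j then 1 else 0) - 1 =
        (1 - (l i).1 * conj ((l j).1)) * Γ i j + (1 - (l i).2 * conj ((l j).2)) * Δ i j) :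
    ∃ K : Matrix (Fin n) (Fin n) ℂ, K.PosDef ∧
      (Matrix.of fun i j => (1 - (l i).1 * conj ((l j).1)) * K i j).PosSemidef ∧
      (Matrix.of fun i j => (1 - (l i).2 * conj ((l j).2)) * K i j).PosSemidef ∧
      ¬ (Matrix.of fun i j =>
          ((M : ℂ) * (if i = j then 1 else 0) - 1) * K i j).PosSemidef := by
  classical
  rcases Nat.eq_zero_or_pos n with hn | hn
  · subst hn
    exact absurd ⟨0, 0, SepAux.psd_zero, SepAux.psd_zero, fun i => i.elim0⟩ hnot
  haveI : Nonempty (Fin n) := Fin.pos_iff_nonempty.mp hn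
  set c1 : Matrix (Fin n) (Fin n) ℂ :=
    Matrix.of fun i j => 1 - (l i).1 * conj ((l j).1) with hc1
  set c2 : Matrix (Fin n) (Fin n) ℂ :=
    Matrix.of fun i j => 1 - (l i).2 * conj ((l j).2) with hc2
  set A : Matrix (Fin n) (Fin n) ℂ :=
    Matrix.of fun i j => (M : ℂ) * (if i = j then 1 else 0) - 1 with hAdef
  -- diagonal positivity
  have hdiagc1 : ∀ i, c1 i i = ((1 - Complex.normSq ((l i).1) : ℝ) : ℂ) := by
    intro i
    show 1 - (l i).1 * conj ((l i).1) = _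
    rw [Complex.mul_conj]
    push_cast
    ring
  have hdiagc2 : ∀ i, c2 i i = ((1 - Complex.normSq ((l i).2) : ℝ) : ℂ) := by
    intro i
    show 1 - (l i).2 * conj ((l i).2) = _
    rw [Complex.mul_conj]
    push_cast
    ring
  have hpos1 : ∀ i, 0 < (c1 i i).re := by
    intro i
    rw [hdiagc1 i, Complex.ofReal_re]
    have h := (hl i).1
    rw [Complex.normSq_eq_norm_sq]
    nlinarith [norm_nonneg ((l i).1)]
  have hpos2 : ∀ i, 0 < (c2 i i).re := by
    intro i
    rw [hdiagc2 i, Complex.ofReal_re]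
    have h := (hl i).2
    rw [Complex.normSq_eq_norm_sq]
    nlinarith [norm_nonneg ((l i).2)]
  -- uniform lower bound on diagonal
  set m : ℝ := Finset.univ.inf' Finset.univ_nonempty fun i => min (c1 i i).re (c2 i i).re with hmdef
  have hmpos : 0 < m := by
    rw [hmdef, Finset.lt_inf'_iff]
    exact fun i _ => lt_min (hpos1 i) (hpos2 i)
  have hm1 : ∀ i, m ≤ (c1 i i).re := fun i =>
    le_trans (Finset.inf'_le _ (Finset.mem_univ i)) (min_le_left _ _)
  have hm2 : ∀ i, m ≤ (c2 i i).re := fun i =>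
    le_trans (Finset.inf'_le _ (Finset.mem_univ i)) (min_le_right _ _)
  -- the wedge is a closed convex set not containing A
  have hclosed := SepAux.isClosed_wedge c1 c2 m hmpos hm1 hm2
  have hconvex : Convex ℝ (SepAux.wedge c1 c2) := by
    rintro p ⟨Γp, Δp, h1p, h2p, h3p⟩ q ⟨Γq, Δq, h1q, h2q, h3q⟩ s t hs ht hst
    refine ⟨(s : ℂ) • Γp + (t : ℂ) • Γq, (s : ℂ) • Δp + (t : ℂ) • Δq,
      SepAux.psd_add (SepAux.psd_smul h1p hs) (SepAux.psd_smul h1q ht),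
      SepAux.psd_add (SepAux.psd_smul h2p hs) (SepAux.psd_smul h2q ht), fun i j => ?_⟩
    simp only [Matrix.add_apply, Matrix.smul_apply, Pi.add_apply, Pi.smul_apply,
      Complex.real_smul, smul_eq_mul]
    rw [h3p i j, h3q i j]
    ring
  have hanot : A ∉ SepAux.wedge c1 c2 := by
    rintro ⟨Γ, Δ, hΓ, hΔ, hX⟩
    exact hnot ⟨Γ, Δ, hΓ, hΔ, fun i j => hX i j⟩
  haveI : LocallyConvexSpace ℝ (Matrix (Fin n) (Fin n) ℂ) := NormedSpace.toLocallyConvexSpace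
  obtain ⟨f, u, hfa, hfw⟩ := geometric_hahn_banach_point_closed hconvex hclosed hanot
  have hzero_mem : (0 : Matrix (Fin n) (Fin n) ℂ) ∈ SepAux.wedge c1 c2 :=
    ⟨0, 0, SepAux.psd_zero, SepAux.psd_zero, by simp⟩
  have hu0 : u < 0 := by
    have := hfw 0 hzero_mem
    simpa using this
  have hfpos : ∀ b ∈ SepAux.wedge c1 c2, 0 ≤ f b := by
    intro b hb
    by_contra hneg
    push_neg at hneg
    have hs : (0 : ℝ) ≤ 2 * u / f b :=
      le_of_lt (div_pos_of_neg_of_neg (by linarith) hneg)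
    have hsmem : ((2 * u / f b : ℝ)) • b ∈ SepAux.wedge c1 c2 := by
      obtain ⟨Γ, Δ, hΓ, hΔ, hX⟩ := hb
      refine ⟨((2 * u / f b : ℝ) : ℂ) • Γ, ((2 * u / f b : ℝ) : ℂ) • Δ,
        SepAux.psd_smul hΓ hs, SepAux.psd_smul hΔ hs, fun i j => ?_⟩
      simp only [Matrix.smul_apply, Pi.smul_apply, Complex.real_smul, smul_eq_mul]
      rw [hX i j]
      ring
    have hlt := hfw _ hsmem
    rw [map_smul, smul_eq_mul, div_mul_cancel₀ _ (ne_of_lt hneg)] at hlt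
    linarith
  -- representation of f via a matrix c
  set c : Matrix (Fin n) (Fin n) ℂ := Matrix.of fun i j =>
    ((f (Matrix.single i j 1) : ℝ) : ℂ)
      - ((f (Matrix.single i j Complex.I) : ℝ) : ℂ) * Complex.I with hcdef
  have hformula : ∀ T : Matrix (Fin n) (Fin n) ℂ, f T = ∑ i, ∑ j, (T i j * c i j).re := by
    intro T
    conv_lhs => rw [Matrix.matrix_eq_sum_single T]
    rw [map_sum]
    refine Finset.sum_congr rfl fun i _ => ?_
    rw [map_sum]
    refine Finset.sum_congr rfl fun j _ => ?_
    have hdec : Matrix.single i j (T i j)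
        = (T i j).re • Matrix.single i j (1 : ℂ)
          + (T i j).im • Matrix.single i j Complex.I := by
      ext a b
      simp only [Matrix.add_apply, Matrix.smul_apply, Matrix.single, Matrix.of_apply]
      split_ifs with h
      · simp only [Complex.real_smul, smul_eq_mul]
        rw [mul_one]
        exact (Complex.re_add_im _).symm
      · simp
    rw [hdec, map_add, map_smul, map_smul]
    have hcre : (c i j).re = f (Matrix.single i j 1) := by
      simp [hcdef]
    have hcim : (c i j).im = -f (Matrix.single i j Complex.I) := by
      simp [hcdef]
    rw [Complex.mul_re, hcre, hcim]
    simp only [smul_eq_mul]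
    ring
  -- rank-one positivity conditions
  have hc1ne : ∀ i j, c1 i j ≠ 0 := by
    intro i j h
    have h1 : (l i).1 * conj ((l j).1) = 1 := by
      have : (1 : ℂ) - (l i).1 * conj ((l j).1) = 0 := h
      linear_combination -this
    have habs : ‖(l i).1 * conj ((l j).1)‖ < 1 := by
      rw [norm_mul, Complex.norm_conj]
      nlinarith [(hl i).1, (hl j).1, norm_nonneg ((l i).1), norm_nonneg ((l j).1)]
    rw [h1] at habs
    simp at habs
  have hwedge0 : ∀ g : Fin n → ℂ,
      (Matrix.of fun i j => g i * conj (g j)) ∈ SepAux.wedge c1 c2 := by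
    intro g
    refine ⟨Matrix.diagonal g * (Matrix.of fun i j => (1 - (l i).1 * conj ((l j).1))⁻¹)
        * (Matrix.diagonal g)ᴴ, 0,
      (SepAux.szego_psd (fun i => (l i).1) (fun i => (hl i).1)).mul_mul_conjTranspose_same _,
      SepAux.psd_zero, fun i j => ?_⟩
    rw [Matrix.diagonal_conjTranspose, Matrix.mul_diagonal, Matrix.diagonal_mul]
    simp only [Matrix.of_apply, Matrix.zero_apply, mul_zero, add_zero, Pi.star_apply,
      RCLike.star_def]
    have hinv : c1 i j * (1 - (l i).1 * conj ((l j).1))⁻¹ = 1 := mul_inv_cancel₀ (hc1ne i j)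
    show g i * conj (g j) = c1 i j * (g i * (1 - (l i).1 * conj ((l j).1))⁻¹ * conj (g j))
    calc g i * conj (g j) = (c1 i j * (1 - (l i).1 * conj ((l j).1))⁻¹) * (g i * conj (g j)) := by
          rw [hinv, one_mul]
      _ = c1 i j * (g i * (1 - (l i).1 * conj ((l j).1))⁻¹ * conj (g j)) := by ring
  have hwedgec1 : ∀ g : Fin n → ℂ,
      (Matrix.of fun i j => c1 i j * (g i * conj (g j))) ∈ SepAux.wedge c1 c2 := by
    intro g
    exact ⟨Matrix.of fun i j => g i * conj (g j), 0, SepAux.psd_rankone g, SepAux.psd_zero,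
      fun i j => by simp only [Matrix.of_apply, Matrix.zero_apply, mul_zero, add_zero]⟩
  have hwedgec2 : ∀ g : Fin n → ℂ,
      (Matrix.of fun i j => c2 i j * (g i * conj (g j))) ∈ SepAux.wedge c1 c2 := by
    intro g
    exact ⟨0, Matrix.of fun i j => g i * conj (g j), SepAux.psd_zero, SepAux.psd_rankone g,
      fun i j => by simp only [Matrix.of_apply, Matrix.zero_apply, mul_zero, zero_add]⟩
  have hpos_for : ∀ d : Matrix (Fin n) (Fin n) ℂ,
      (∀ g : Fin n → ℂ, (Matrix.of fun i j => d i j * (g i * conj (g j)))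
          ∈ SepAux.wedge c1 c2) →
      ∀ g : Fin n → ℂ, 0 ≤ (∑ i, ∑ j, d i j * (g i * conj (g j)) * c i j).re := by
    intro d hmem g
    have h0 := hfpos _ (hmem g)
    rw [hformula] at h0
    have key : (∑ i, ∑ j, d i j * (g i * conj (g j)) * c i j).re
        = ∑ i, ∑ j, (d i j * (g i * conj (g j)) * c i j).re := by
      rw [Complex.re_sum]
      exact Finset.sum_congr rfl fun i _ => by rw [Complex.re_sum]
    rw [key]
    exact h0
  -- the hermitization of c
  set K0 : Matrix (Fin n) (Fin n) ℂ := Matrix.of fun i j => (c i j + conj (c j i)) / 2 with hK0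
  have hd1 : ∀ i j, conj (c1 j i) = c1 i j := by
    intro i j
    show conj (1 - (l j).1 * conj ((l i).1)) = 1 - (l i).1 * conj ((l j).1)
    rw [map_sub, map_one, map_mul, Complex.conj_conj]
    ring
  have hd2 : ∀ i j, conj (c2 j i) = c2 i j := by
    intro i j
    show conj (1 - (l j).2 * conj ((l i).2)) = 1 - (l i).2 * conj ((l j).2)
    rw [map_sub, map_one, map_mul, Complex.conj_conj]
    ring
  have hpsd1 : (Matrix.of fun i j => c1 i j * K0 i j).PosSemidef :=
    SepAux.herm_quad c c1 hd1 (hpos_for c1 hwedgec1)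
  have hpsd2 : (Matrix.of fun i j => c2 i j * K0 i j).PosSemidef :=
    SepAux.herm_quad c c2 hd2 (hpos_for c2 hwedgec2)
  have hK0psd : K0.PosSemidef := by
    have hone : ∀ i j : Fin n,
        conj ((Matrix.of fun _ _ => (1 : ℂ)) j i) = (Matrix.of fun _ _ => (1 : ℂ)) i j := by
      intro i j; simp
    have honemem : ∀ g : Fin n → ℂ,
        (Matrix.of fun i j => (Matrix.of fun _ _ => (1:ℂ)) i j * (g i * conj (g j)))
          ∈ SepAux.wedge c1 c2 := by
      intro g
      have := hwedge0 g
      have heq : (Matrix.of fun i j => (Matrix.of fun _ _ => (1:ℂ)) i j * (g i * conj (g j)))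
          = Matrix.of fun i j => g i * conj (g j) := by
        ext i j; simp
      rw [heq]
      exact this
    have h := SepAux.herm_quad c (Matrix.of fun _ _ => (1 : ℂ)) hone
      (hpos_for _ honemem)
    have heq : (Matrix.of fun i j => (Matrix.of fun _ _ => (1:ℂ)) i j * ((c i j + conj (c j i)) / 2))
        = K0 := by
      ext i j; simp [hK0]
    rwa [heq] at h
  -- value of f at A, and negativity
  have hfA_eq : f A = ∑ i, ∑ j, (A i j * c i j).re := hformula A
  have hfA_neg : f A < 0 := lt_trans hfa hu0
  have hAsym : ∀ i j : Fin n, A j i = A i j := by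
    intro i j
    show (M : ℂ) * (if j = i then 1 else 0) - 1 = (M : ℂ) * (if i = j then 1 else 0) - 1
    by_cases h : i = j
    · rw [h]
    · rw [if_neg h, if_neg (Ne.symm h)]
  have hAim : ∀ i j : Fin n, (A i j).im = 0 := by
    intro i j
    show ((M : ℂ) * (if i = j then 1 else 0) - 1).im = 0
    split_ifs <;> simp
  have hsum0 : ∑ i, ∑ j, (A i j * K0 i j).re = f A := by
    rw [hfA_eq]
    have hterm : ∀ i j : Fin n, (A i j * K0 i j).re
        = ((A i j * c i j).re + (A i j * conj (c j i)).re) / 2 := by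
      intro i j
      have hmul : A i j * K0 i j * 2 = A i j * c i j + A i j * conj (c j i) := by
        show A i j * ((c i j + conj (c j i)) / 2) * 2 = _
        ring
      have hre2 := congrArg Complex.re hmul
      rw [Complex.add_re] at hre2
      have h2 : (A i j * K0 i j * 2).re = (A i j * K0 i j).re * 2 := by
        rw [Complex.mul_re]
        simp
      rw [h2] at hre2
      linarith
    have hswap : ∑ i, ∑ j, (A i j * conj (c j i)).re = ∑ i, ∑ j, (A i j * c i j).re := by
      rw [Finset.sum_comm]
      refine Finset.sum_congr rfl fun i _ => Finset.sum_congr rfl fun j _ => ?_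
      rw [hAsym i j, Complex.mul_re, Complex.mul_re, Complex.conj_re, Complex.conj_im, hAim i j]
      ring
    calc ∑ i, ∑ j, (A i j * K0 i j).re
        = ∑ i, ∑ j, (((A i j * c i j).re + (A i j * conj (c j i)).re) / 2) :=
          Finset.sum_congr rfl fun i _ => Finset.sum_congr rfl fun j _ => hterm i j
      _ = ((∑ i, ∑ j, (A i j * c i j).re) + ∑ i, ∑ j, (A i j * conj (c j i)).re) / 2 := by
          simp only [← Finset.sum_add_distrib, ← Finset.sum_div]
      _ = ∑ i, ∑ j, (A i j * c i j).re := by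
          rw [hswap]
          ring
  -- choice of epsilon
  set ε : ℝ := (-(f A) / 2) / (n * |M - 1| + 1) with hεdef
  have hδpos : (0 : ℝ) < n * |M - 1| + 1 := by positivity
  have hεpos : 0 < ε := div_pos (by linarith) hδpos
  set K : Matrix (Fin n) (Fin n) ℂ := K0 + (ε : ℂ) • 1 with hKdef
  have hKentry : ∀ i j : Fin n, K i j = K0 i j + (ε : ℂ) * (if i = j then 1 else 0) := by
    intro i j
    rw [hKdef]
    simp [Matrix.add_apply, Matrix.smul_apply, Matrix.one_apply, smul_eq_mul]
  have hεC : (0 : ℂ) < (ε : ℂ) := Complex.zero_lt_real.2 hεpos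
  refine ⟨K, ?_, ?_, ?_, ?_⟩
  · -- positive definiteness
    refine Matrix.PosDef.of_dotProduct_mulVec_pos ?_ ?_
    · have h2 : ((ε : ℂ) • (1 : Matrix (Fin n) (Fin n) ℂ)).IsHermitian := by
        unfold Matrix.IsHermitian
        rw [Matrix.conjTranspose_smul, Matrix.conjTranspose_one]
        congr 1
        exact Complex.conj_ofReal ε
      exact hK0psd.1.add h2
    · intro x hx
      rw [hKdef, Matrix.add_mulVec, dotProduct_add, Matrix.smul_mulVec,
        Matrix.one_mulVec, dotProduct_smul, smul_eq_mul]
      exact add_pos_of_nonneg_of_pos (hK0psd.dotProduct_mulVec_nonneg x)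
        (mul_pos hεC (Matrix.dotProduct_star_self_pos_iff.mpr hx))
  · -- first Schur product
    have heq : (Matrix.of fun i j => (1 - (l i).1 * conj ((l j).1)) * K i j)
        = (Matrix.of fun i j => c1 i j * K0 i j)
          + Matrix.diagonal (fun i => (ε : ℂ) * c1 i i) := by
      ext i j
      simp only [Matrix.of_apply, Matrix.add_apply, Matrix.diagonal_apply]
      rw [show (1 - (l i).1 * conj ((l j).1)) = c1 i j from rfl, hKentry i j]
      by_cases h : i = j
      · rw [if_pos h, if_pos h, h]
        ring
      · rw [if_neg h, if_neg h]
        ring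
    rw [heq]
    refine SepAux.psd_add hpsd1 (Matrix.posSemidef_diagonal_iff.mpr fun i => ?_)
    rw [hdiagc1 i,
      show ((ε : ℂ) * ((1 - Complex.normSq ((l i).1) : ℝ) : ℂ))
        = ((ε * (1 - Complex.normSq ((l i).1)) : ℝ) : ℂ) by push_cast; ring]
    refine Complex.zero_le_real.2 ?_
    have hp := hpos1 i
    rw [hdiagc1 i, Complex.ofReal_re] at hp
    nlinarith [le_of_lt hεpos]
  · -- second Schur product
    have heq : (Matrix.of fun i j => (1 - (l i).2 * conj ((l j).2)) * K i j)
        = (Matrix.of fun i j => c2 i j * K0 i j)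
          + Matrix.diagonal (fun i => (ε : ℂ) * c2 i i) := by
      ext i j
      simp only [Matrix.of_apply, Matrix.add_apply, Matrix.diagonal_apply]
      rw [show (1 - (l i).2 * conj ((l j).2)) = c2 i j from rfl, hKentry i j]
      by_cases h : i = j
      · rw [if_pos h, if_pos h, h]
        ring
      · rw [if_neg h, if_neg h]
        ring
    rw [heq]
    refine SepAux.psd_add hpsd2 (Matrix.posSemidef_diagonal_iff.mpr fun i => ?_)
    rw [hdiagc2 i,
      show ((ε : ℂ) * ((1 - Complex.normSq ((l i).2) : ℝ) : ℂ))
        = ((ε * (1 - Complex.normSq ((l i).2)) : ℝ) : ℂ) by push_cast; ring]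
    refine Complex.zero_le_real.2 ?_
    have hp := hpos2 i
    rw [hdiagc2 i, Complex.ofReal_re] at hp
    nlinarith [le_of_lt hεpos]
  · -- final matrix is not PSD
    intro hP
    set v : Fin n → ℂ := fun _ => 1 with hv
    have hstarv : star v = v := by
      funext k
      simp [hv]
    have hQ := hP.dotProduct_mulVec_nonneg v
    have hQval : star v ⬝ᵥ ((Matrix.of fun i j =>
        ((M : ℂ) * (if i = j then 1 else 0) - 1) * K i j) *ᵥ v)
        = ∑ i, ∑ j, A i j * K i j := by
      rw [hstarv, dotProduct]
      refine Finset.sum_congr rfl fun i _ => ?_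
      rw [Matrix.mulVec, dotProduct]
      simp only [hv, one_mul, mul_one, Matrix.of_apply]
      rfl
    have hAii : ∀ i : Fin n, A i i = ((M - 1 : ℝ) : ℂ) := by
      intro i
      show (M : ℂ) * (if i = i then 1 else 0) - 1 = _
      rw [if_pos rfl]
      push_cast
      ring
    have hsplit : ∀ i j : Fin n, (A i j * K i j).re
        = (A i j * K0 i j).re + ε * (if i = j then M - 1 else 0) := by
      intro i j
      rw [hKentry i j]
      by_cases h : i = j
      · rw [if_pos h, if_pos h, mul_one, mul_add, Complex.add_re]
        congr 1
        rw [h, hAii j, ← Complex.ofReal_mul]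
        rw [show ((M - 1 : ℝ)) * ε = ε * (M - 1) from by ring]
        exact Complex.ofReal_re _
      · rw [if_neg h, if_neg h, mul_zero, add_zero, mul_zero, add_zero]
    have hre : (∑ i, ∑ j, A i j * K i j).re = f A + ε * (n * (M - 1)) := by
      rw [Complex.re_sum]
      calc ∑ i, (∑ j, A i j * K i j).re
          = ∑ i, ∑ j, (A i j * K i j).re :=
            Finset.sum_congr rfl fun i _ => by rw [Complex.re_sum]
        _ = ∑ i, ∑ j, ((A i j * K0 i j).re + ε * (if i = j then M - 1 else 0)) :=
            Finset.sum_congr rfl fun i _ => Finset.sum_congr rfl fun j _ => hsplit i j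
        _ = (∑ i, ∑ j, (A i j * K0 i j).re) + ∑ i, ∑ j, ε * (if i = j then M - 1 else 0) := by
            simp only [Finset.sum_add_distrib]
            rfl
        _ = f A + ε * (n * (M - 1)) := by
            rw [hsum0]
            congr 1
            have hj : ∀ i : Fin n, ∑ j, ε * (if i = j then M - 1 else 0) = ε * (M - 1) := by
              intro i
              rw [← Finset.mul_sum, Finset.sum_ite_eq Finset.univ i fun _ => M - 1,
                if_pos (Finset.mem_univ i)]
            rw [Finset.sum_congr rfl fun i _ => hj i, Finset.sum_const, Finset.card_univ,
              Fintype.card_fin, nsmul_eq_mul]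
            ring
    have h0le : 0 ≤ (∑ i, ∑ j, A i j * K i j).re := by
      rw [← hQval]
      exact (Complex.le_def.mp hQ).1
    rw [hre] at h0le
    have hb1 : ε * (n * (M - 1)) ≤ ε * (n * |M - 1|) := by
      apply mul_le_mul_of_nonneg_left _ (le_of_lt hεpos)
      exact mul_le_mul_of_nonneg_left (le_abs_self _) (Nat.cast_nonneg n)
    have hb2 : ε * (n * |M - 1|) ≤ ε * (n * |M - 1| + 1) := by nlinarith
    have hb3 : ε * (n * |M - 1| + 1) = -(f A) / 2 := by
      rw [hεdef, div_mul_cancel₀ _ (ne_of_gt hδpos)]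
    linarith
end
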